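/- Let A be a Banach algebra and B a Banach A-bimodule whose closed unit ball is weakly compact. Suppose (e_α) is a bounded net in A which is a right approximate identity for B (‖π_r(b, e_α) − b‖ → 0 for every b ∈ B), that ê_α → e″ weak* in A** (ê_α the canonical image of e_α), that for every b″ ∈ B** and every net (a″_β) in A** with a″_β → e″ weak* one has π_r***(b″, a″_β) → π_r***(b″, e″) weak* in B**, and that π_r***(b″, ê_α) lies in the canonical image of B in B** for every α and every b″ ∈ B**. Then Z^ℓ_{A**}(B**) = B**, i.e., for every b″ ∈ B** the map a″ ↦ π_r***(b″, a″) is weak*–weak* continuous from A** to B**. -/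

import Mathlib

set_option maxHeartbeats 2000000

/- Common setup: Arens extensions of bounded bilinear maps between Banach spaces,
weak*–weak* continuity, and related notions. -/

open NormedSpace ContinuousLinearMap Filter Topology

/-! `NormedSpace.Dual` is no longer in Mathlib (it became `StrongDual`, an `abbrev`); it is
restored here with its old meaning, the continuous dual `E →L[𝕜] 𝕜` with the operator norm. -/

namespace NormedSpace

/-- The topological dual of a normed space `E`. -/
def Dual (𝕜 : Type*) [NontriviallyNormedField 𝕜] (E : Type*) [NormedAddCommGroup E]
    [NormedSpace 𝕜 E] : Type _ :=
  E →L[𝕜] 𝕜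

section DualInstances

variable (𝕜 : Type*) [NontriviallyNormedField 𝕜] (E : Type*) [NormedAddCommGroup E]
  [NormedSpace 𝕜 E]

noncomputable instance : NormedAddCommGroup (Dual 𝕜 E) :=
  ContinuousLinearMap.toNormedAddCommGroup

noncomputable instance : NormedSpace 𝕜 (Dual 𝕜 E) :=
  ContinuousLinearMap.toNormedSpace

instance : FunLike (Dual 𝕜 E) E 𝕜 :=
  ContinuousLinearMap.funLike

instance : ContinuousLinearMapClass (Dual 𝕜 E) 𝕜 E 𝕜 :=
  ContinuousLinearMap.continuousSemilinearMapClass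

end DualInstances

/-- The identity map from the dual to the weak dual. -/
noncomputable def Dual.toWeakDual {𝕜 : Type*} [NontriviallyNormedField 𝕜] {E : Type*} [NormedAddCommGroup E]
    [NormedSpace 𝕜 E] : Dual 𝕜 E ≃ₗ[𝕜] WeakDual 𝕜 E :=
  StrongDual.toWeakDual

end NormedSpace

/-- The identity map from the weak dual to the dual. -/
noncomputable def WeakDual.toNormedDual {𝕜 : Type*} [NontriviallyNormedField 𝕜] {E : Type*}
    [NormedAddCommGroup E] [NormedSpace 𝕜 E] : WeakDual 𝕜 E ≃ₗ[𝕜] NormedSpace.Dual 𝕜 E :=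
  WeakDual.toStrongDual

section ArensDefs

variable (𝕜 : Type*) [RCLike 𝕜]
variable {X Y Z : Type*}
  [NormedAddCommGroup X] [NormedSpace 𝕜 X]
  [NormedAddCommGroup Y] [NormedSpace 𝕜 Y]
  [NormedAddCommGroup Z] [NormedSpace 𝕜 Z]

/-- The first adjoint `m*` of a bounded bilinear map `m : X × Y → Z`, characterized by
`⟨m*(z′,x), y⟩ = ⟨z′, m(x,y)⟩`. -/
noncomputable def arensS (m : X →L[𝕜] Y →L[𝕜] Z) :
    Dual 𝕜 Z →L[𝕜] X →L[𝕜] Dual 𝕜 Y :=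
  ((compL 𝕜 X (Y →L[𝕜] Z) (Dual 𝕜 Y)).flip m).comp (compL 𝕜 Y Z 𝕜)

/-- The second adjoint `m**`, characterized by `⟨m**(y″,z′), x⟩ = ⟨y″, m*(z′,x)⟩`. -/
noncomputable def arensSS (m : X →L[𝕜] Y →L[𝕜] Z) :
    Dual 𝕜 (Dual 𝕜 Y) →L[𝕜] Dual 𝕜 Z →L[𝕜] Dual 𝕜 X :=
  ((compL 𝕜 (Dual 𝕜 Z) (X →L[𝕜] Dual 𝕜 Y) (Dual 𝕜 X)).flip (arensS 𝕜 m)).comp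
    (compL 𝕜 X (Dual 𝕜 Y) 𝕜)

/-- The Arens (triple adjoint) extension `m***` of a bounded bilinear map, characterized by
`⟨m***(x″,y″), z′⟩ = ⟨x″, m**(y″,z′)⟩`. -/
noncomputable def arensExt (m : X →L[𝕜] Y →L[𝕜] Z) :
    Dual 𝕜 (Dual 𝕜 X) →L[𝕜] Dual 𝕜 (Dual 𝕜 Y) →L[𝕜] Dual 𝕜 (Dual 𝕜 Z) :=
  ((compL 𝕜 (Dual 𝕜 (Dual 𝕜 Y)) (Dual 𝕜 Z →L[𝕜] Dual 𝕜 X) (Dual 𝕜 (Dual 𝕜 Z))).flip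
      (arensSS 𝕜 m)).comp
    (compL 𝕜 (Dual 𝕜 Z) (Dual 𝕜 X) 𝕜)

end ArensDefs

/-- A map between dual spaces is weak*–weak* continuous if it is continuous with respect to
the weak* topologies on both sides. -/
def IsWeakStarWeakStarContinuous (𝕜 : Type*) [RCLike 𝕜] {E F : Type*}
    [NormedAddCommGroup E] [NormedSpace 𝕜 E]
    [NormedAddCommGroup F] [NormedSpace 𝕜 F]
    (T : Dual 𝕜 E → Dual 𝕜 F) : Prop :=
  Continuous fun x : WeakDual 𝕜 E =>
    (Dual.toWeakDual (T (WeakDual.toNormedDual x)) : WeakDual 𝕜 F)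

/-- Let `A` be a Banach algebra and `B` a Banach `A`-bimodule whose closed
unit ball is weakly compact.  Suppose `(e_α)` is a bounded net in `A` which is a right
approximate identity for `B`, `ê_α → e″` weak* in `A**`, for every `b″ ∈ B**` the map
`a″ ↦ π_r***(b″, a″)` is weak*–weak* continuous at `e″` (the locally topological center
condition `Z^ℓ_{e″}(B**) = B**`), and `π_r***(b″, ê_α)` lies in the canonical image of `B`
in `B**` for every `α, b″`.  Then `Z^ℓ_{A**}(B**) = B**`. -/
theorem leftTopologicalCenter_eq_of_weaklyCompactBall_of_rightApproxIdentity
    {𝕜 : Type*} [RCLike 𝕜]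
    {A : Type*} [NonUnitalNormedRing A] [NormedSpace 𝕜 A]
    [IsScalarTower 𝕜 A A] [SMulCommClass 𝕜 A A] [CompleteSpace A]
    {B : Type*} [NormedAddCommGroup B] [NormedSpace 𝕜 B] [CompleteSpace B]
    (πℓ : A →L[𝕜] B →L[𝕜] B) (πr : B →L[𝕜] A →L[𝕜] B)
    (hℓ : ∀ (a₁ a₂ : A) (b : B), πℓ (a₁ * a₂) b = πℓ a₁ (πℓ a₂ b))
    (hr : ∀ (b : B) (a₁ a₂ : A), πr b (a₁ * a₂) = πr (πr b a₁) a₂)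
    (hℓr : ∀ (a₁ : A) (b : B) (a₂ : A), πr (πℓ a₁ b) a₂ = πℓ a₁ (πr b a₂))
    (hball : IsCompact (toWeakSpace 𝕜 B '' Metric.closedBall (0 : B) 1))
    {ι : Type*} (l : Filter ι) [l.NeBot] (e : ι → A)
    (hbd : ∃ C : ℝ, ∀ i, ‖e i‖ ≤ C)
    (hRAI : ∀ b : B, Tendsto (fun i => ‖πr b (e i) - b‖) l (𝓝 0))
    (e'' : Dual 𝕜 (Dual 𝕜 A))
    (hconv : Tendsto
      (fun i => (Dual.toWeakDual (inclusionInDoubleDual 𝕜 A (e i)) : WeakDual 𝕜 (Dual 𝕜 A)))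
      l (𝓝 (Dual.toWeakDual e'')))
    (hcenter : ∀ b'' : Dual 𝕜 (Dual 𝕜 B),
      ContinuousAt
        (fun a'' : WeakDual 𝕜 (Dual 𝕜 A) =>
          (Dual.toWeakDual (arensExt 𝕜 πr b'' (WeakDual.toNormedDual a'')) :
            WeakDual 𝕜 (Dual 𝕜 B)))
        (Dual.toWeakDual e''))
    (hrange : ∀ (i : ι) (b'' : Dual 𝕜 (Dual 𝕜 B)), ∃ b : B,
      inclusionInDoubleDual 𝕜 B b = arensExt 𝕜 πr b'' (inclusionInDoubleDual 𝕜 A (e i))) :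
    ∀ b'' : Dual 𝕜 (Dual 𝕜 B),
      IsWeakStarWeakStarContinuous 𝕜
        (fun a'' : Dual 𝕜 (Dual 𝕜 A) => arensExt 𝕜 πr b'' a'') := by
  intro b''
  classical
  -- abbreviations
  set J := inclusionInDoubleDual 𝕜 B with hJ
  set JA := inclusionInDoubleDual 𝕜 A with hJA
  -- pointwise weak* convergence of ê_i to e''
  have hconv' : ∀ f : Dual 𝕜 A, Tendsto (fun i => f (e i)) l (𝓝 (e'' f)) := by
    intro f
    exact tendsto_iff_forall_eval_tendsto_topDualPairing.1 hconv f
  -- Step A : arensSS 𝕜 πr e'' z' = z' for every z'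
  have hSS : ∀ z' : Dual 𝕜 B, arensSS 𝕜 πr e'' z' = z' := by
    intro z'
    refine ContinuousLinearMap.ext fun b₀ => ?_
    have h1 : Tendsto (fun i => (arensS 𝕜 πr z' b₀) (e i)) l (𝓝 (e'' (arensS 𝕜 πr z' b₀))) :=
      hconv' _
    have h2 : Tendsto (fun i => πr b₀ (e i)) l (𝓝 b₀) :=
      tendsto_iff_norm_sub_tendsto_zero.2 (hRAI b₀)
    have h3 : Tendsto (fun i => z' (πr b₀ (e i))) l (𝓝 (z' b₀)) :=
      (z'.continuous.tendsto b₀).comp h2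
    have h1' : Tendsto (fun i => z' (πr b₀ (e i))) l (𝓝 (e'' (arensS 𝕜 πr z' b₀))) := h1
    show e'' (arensS 𝕜 πr z' b₀) = z' b₀
    exact tendsto_nhds_unique h1' h3
  -- Step B : find b with J b = arensExt 𝕜 πr b'' e''
  obtain ⟨C, hC⟩ := hbd
  set K : ℝ := ‖arensExt 𝕜 πr b''‖ * max C 0 + 1 with hK
  have hKpos : 0 < K := by positivity
  choose g hg using fun i => hrange i b''
  have hgbd : ∀ i, ‖g i‖ ≤ K := by
    intro i
    have h1 : ‖J (g i)‖ = ‖g i‖ := (inclusionInDoubleDualLi 𝕜 (E := B)).norm_map (g i)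
    have h2 : ‖arensExt 𝕜 πr b'' (JA (e i))‖ ≤ ‖arensExt 𝕜 πr b''‖ * ‖JA (e i)‖ :=
      (arensExt 𝕜 πr b'').le_opNorm _
    have h3 : ‖JA (e i)‖ = ‖e i‖ := (inclusionInDoubleDualLi 𝕜 (E := A)).norm_map (e i)
    have h4 : ‖e i‖ ≤ max C 0 := le_trans (hC i) (le_max_left _ _)
    calc ‖g i‖ = ‖arensExt 𝕜 πr b'' (JA (e i))‖ := by rw [← h1, hg i]; rfl
      _ ≤ ‖arensExt 𝕜 πr b''‖ * ‖e i‖ := by rw [← h3]; exact h2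
      _ ≤ ‖arensExt 𝕜 πr b''‖ * max C 0 :=
          mul_le_mul_of_nonneg_left h4 (norm_nonneg _)
      _ ≤ K := by rw [hK]; linarith
  set c : 𝕜 := (K : 𝕜) with hc
  have hcnorm : ‖c‖ = K := by
    rw [hc, RCLike.norm_ofReal, abs_of_pos hKpos]
  have hcne : c ≠ 0 := by
    rw [hc]
    exact_mod_cast ne_of_gt hKpos
  -- the scaled net lives in the weakly compact unit ball
  set u : ι → WeakSpace 𝕜 B := fun i => toWeakSpace 𝕜 B (c⁻¹ • g i) with hu
  have humem : ∀ i, u i ∈ toWeakSpace 𝕜 B '' Metric.closedBall (0 : B) 1 := by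
    intro i
    refine ⟨c⁻¹ • g i, ?_, rfl⟩
    rw [Metric.mem_closedBall, dist_zero_right, norm_smul, norm_inv, hcnorm]
    rw [inv_mul_le_iff₀ hKpos, mul_one]
    exact hgbd i
  have hle : Filter.map u l ≤ Filter.principal (toWeakSpace 𝕜 B '' Metric.closedBall (0 : B) 1) := by
    rw [Filter.le_principal_iff, Filter.mem_map]
    exact Filter.Eventually.of_forall humem
  obtain ⟨y, hymem, hyclus⟩ := hball.exists_clusterPt hle
  obtain ⟨b₁, _, hb₁⟩ := hymem
  set b : B := c • b₁ with hb
  -- the continuous map from the weak space into the weak* double dual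
  have hφcont : Continuous (fun w : WeakSpace 𝕜 B =>
      (Dual.toWeakDual (J (c • (toWeakSpace 𝕜 B).symm w)) : WeakDual 𝕜 (Dual 𝕜 B))) := by
    apply WeakDual.continuous_of_continuous_eval
    intro z'
    have h1 : Continuous fun w : WeakSpace 𝕜 B => z' ((toWeakSpace 𝕜 B).symm w) :=
      WeakBilin.eval_continuous ((topDualPairing 𝕜 B).flip) z'
    have h2 : (fun w : WeakSpace 𝕜 B =>
        (Dual.toWeakDual (J (c • (toWeakSpace 𝕜 B).symm w)) : WeakDual 𝕜 (Dual 𝕜 B)) z')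
        = fun w => c * z' ((toWeakSpace 𝕜 B).symm w) := by
      funext w
      show z' (c • (toWeakSpace 𝕜 B).symm w) = _
      rw [map_smul, smul_eq_mul]
    rw [h2]
    exact continuous_const.mul h1
  -- cluster point of the image net
  have hclus2 : MapClusterPt (Dual.toWeakDual (J b) : WeakDual 𝕜 (Dual 𝕜 B)) l
      (fun i => Dual.toWeakDual (J (g i))) := by
    have hyclus' : MapClusterPt y l u := hyclus
    have h := hyclus'.continuousAt_comp hφcont.continuousAt
    have hcomp : ((fun w : WeakSpace 𝕜 B =>
        (Dual.toWeakDual (J (c • (toWeakSpace 𝕜 B).symm w)) : WeakDual 𝕜 (Dual 𝕜 B))) ∘ u)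
        = fun i => Dual.toWeakDual (J (g i)) := by
      funext i
      show Dual.toWeakDual (J (c • (toWeakSpace 𝕜 B).symm (toWeakSpace 𝕜 B (c⁻¹ • g i)))) = _
      rw [LinearEquiv.symm_apply_apply, smul_smul, mul_inv_cancel₀ hcne, one_smul]
    have hfy : (Dual.toWeakDual (J (c • (toWeakSpace 𝕜 B).symm y)) : WeakDual 𝕜 (Dual 𝕜 B))
        = Dual.toWeakDual (J b) := by
      rw [← hb₁, LinearEquiv.symm_apply_apply, hb]; rfl
    rw [hcomp, hfy] at h
    exact h
  -- the image net converges weak* to arensExt πr b'' e''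
  have htend : Tendsto (fun i => Dual.toWeakDual (J (g i))) l
      (𝓝 (Dual.toWeakDual (arensExt 𝕜 πr b'' e''))) := by
    have h1 : Tendsto (fun i =>
        (Dual.toWeakDual (arensExt 𝕜 πr b'' (JA (e i))) : WeakDual 𝕜 (Dual 𝕜 B))) l
        (𝓝 (Dual.toWeakDual (arensExt 𝕜 πr b'' e''))) := (hcenter b'').tendsto.comp hconv
    have h2 : (fun i => (Dual.toWeakDual (J (g i)) : WeakDual 𝕜 (Dual 𝕜 B)))
        = fun i => Dual.toWeakDual (arensExt 𝕜 πr b'' (JA (e i))) := by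
      funext i; rw [hg i]
    exact h1.congr (fun i => (congrFun h2 i).symm)
  -- uniqueness : J b = arensExt πr b'' e''
  have huniq : (Dual.toWeakDual (arensExt 𝕜 πr b'' e'') : WeakDual 𝕜 (Dual 𝕜 B))
      = Dual.toWeakDual (J b) := by
    have hne : (𝓝 (Dual.toWeakDual (arensExt 𝕜 πr b'' e'') : WeakDual 𝕜 (Dual 𝕜 B)) ⊓
        𝓝 (Dual.toWeakDual (J b))).NeBot := by
      have h1 : (𝓝 (Dual.toWeakDual (J b) : WeakDual 𝕜 (Dual 𝕜 B)) ⊓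
          Filter.map (fun i => (Dual.toWeakDual (J (g i)) : WeakDual 𝕜 (Dual 𝕜 B))) l).NeBot :=
        hclus2
      refine h1.mono ?_
      rw [inf_comm]
      exact inf_le_inf htend le_rfl
    exact t2_iff_nhds.1 inferInstance hne
  have hJb : J b = arensExt 𝕜 πr b'' e'' :=
    (Dual.toWeakDual.injective (congrArg id huniq)).symm
  -- Step C : b'' = J b
  have hb'' : b'' = J b := by
    refine ContinuousLinearMap.ext fun z' => ?_
    have h1 : b'' z' = b'' (arensSS 𝕜 πr e'' z') := by rw [hSS z']
    have h2 : b'' (arensSS 𝕜 πr e'' z') = arensExt 𝕜 πr b'' e'' z' := rfl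
    exact (h1.trans h2).trans (congrArg (fun f : Dual 𝕜 (Dual 𝕜 B) => f z') hJb.symm)
  -- Final step : weak*-weak* continuity
  rw [hb'']
  unfold IsWeakStarWeakStarContinuous
  apply WeakDual.continuous_of_continuous_eval
  intro z'
  exact WeakDual.eval_continuous (arensS 𝕜 πr z' b)
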